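/- Let p, n be positive integers with 1 ≤ n < p, and κ ≥ 1 a real number. Let S be a symmetric p×p real matrix with spectral decomposition S = U · diag(λ̂₁,…,λ̂_p) · Uᵀ, where U is orthogonal, λ̂₁ ≥ ⋯ ≥ λ̂_n > 0 and λ̂_{n+1} = ⋯ = λ̂_p = 0. If Λ* = diag(λ*₁,…,λ*_p) minimizes ‖Λ − diag(λ̂₁,…,λ̂_p)‖_F over all diagonal matrices Λ = diag(λ₁,…,λ_p) satisfying minᵢ λᵢ ≥ 0 and maxᵢ λᵢ ≤ κ·minᵢ λᵢ, then U Λ* Uᵀ is symmetric positive definite, satisfies λ_max(U Λ* Uᵀ) ≤ κ·λ_min(U Λ* Uᵀ), and minimizes ‖Σ − S‖_F over all Σ ∈ F(κ). -/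

import Mathlib

open Matrix

/-- The largest eigenvalue of a (symmetric) real matrix, as the supremum of its spectrum. -/
noncomputable def lamMax {p : ℕ} (A : Matrix (Fin p) (Fin p) ℝ) : ℝ := sSup (spectrum ℝ A)

/-- The smallest eigenvalue of a (symmetric) real matrix, as the infimum of its spectrum. -/
noncomputable def lamMin {p : ℕ} (A : Matrix (Fin p) (Fin p) ℝ) : ℝ := sInf (spectrum ℝ A)

/-- The Frobenius norm of a real matrix. -/
noncomputable def frobNorm {p : ℕ} (A : Matrix (Fin p) (Fin p) ℝ) : ℝ :=
  Real.sqrt (∑ i, ∑ j, (A i j) ^ 2)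

lemma sumSq_eq_trace {p : ℕ} (A : Matrix (Fin p) (Fin p) ℝ) :
    ∑ i, ∑ j, (A i j) ^ 2 = Matrix.trace (Aᵀ * A) := by
  rw [Matrix.trace]
  simp only [Matrix.diag, Matrix.mul_apply, Matrix.transpose_apply, sq]
  rw [Finset.sum_comm]

lemma sumSq_conj {p : ℕ} (U A : Matrix (Fin p) (Fin p) ℝ) (hU : Uᵀ * U = 1) :
    ∑ i, ∑ j, ((U * A * Uᵀ) i j) ^ 2 = ∑ i, ∑ j, (A i j) ^ 2 := by
  rw [sumSq_eq_trace, sumSq_eq_trace]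
  have h : (U * A * Uᵀ)ᵀ * (U * A * Uᵀ) = U * (Aᵀ * A) * Uᵀ := by
    have h2 : (U * A * Uᵀ)ᵀ = U * Aᵀ * Uᵀ := by
      simp only [Matrix.transpose_mul, Matrix.transpose_transpose]; noncomm_ring
    rw [h2]
    calc U * Aᵀ * Uᵀ * (U * A * Uᵀ) = U * Aᵀ * ((Uᵀ * U) * (A * Uᵀ)) := by noncomm_ring
      _ = U * (Aᵀ * A) * Uᵀ := by rw [hU]; noncomm_ring
  rw [h, Matrix.trace_mul_comm, ← Matrix.mul_assoc, hU, Matrix.one_mul]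

lemma frobNorm_conj {p : ℕ} (U A : Matrix (Fin p) (Fin p) ℝ) (hU : Uᵀ * U = 1) :
    frobNorm (U * A * Uᵀ) = frobNorm A := by
  simp only [frobNorm]
  rw [sumSq_conj U A hU]

lemma sumSq_diag_sub {p : ℕ} (a b : Fin p → ℝ) :
    ∑ i, ∑ j, ((Matrix.diagonal a - Matrix.diagonal b) i j) ^ 2 = ∑ i, (a i - b i) ^ 2 := by
  refine Finset.sum_congr rfl fun i _ => ?_
  rw [Finset.sum_eq_single i]
  · simp [Matrix.sub_apply, Matrix.diagonal_apply_eq]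
  · intro j _ hj
    simp [Matrix.sub_apply, Matrix.diagonal_apply_ne' _ hj]
  · simp

lemma frobNorm_diag_sub {p : ℕ} (a b : Fin p → ℝ) :
    frobNorm (Matrix.diagonal a - Matrix.diagonal b) = Real.sqrt (∑ i, (a i - b i) ^ 2) := by
  simp only [frobNorm]; rw [sumSq_diag_sub]

lemma spectrum_conj {p : ℕ} (U A : Matrix (Fin p) (Fin p) ℝ) (hU : Uᵀ * U = 1) :
    spectrum ℝ (U * A * Uᵀ) = spectrum ℝ A := by
  have hU' : U * Uᵀ = 1 := mul_eq_one_comm.mp hU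
  let u : (Matrix (Fin p) (Fin p) ℝ)ˣ := ⟨U, Uᵀ, hU', hU⟩
  exact spectrum.units_conjugate (u := u)

lemma posDef_conj {p : ℕ} (U : Matrix (Fin p) (Fin p) ℝ) (d : Fin p → ℝ)
    (hU : Uᵀ * U = 1) (hd : ∀ i, 0 < d i) :
    (U * Matrix.diagonal d * Uᵀ).PosDef := by
  have hU' : U * Uᵀ = 1 := mul_eq_one_comm.mp hU
  have hDpd : (Matrix.diagonal d).PosDef := Matrix.PosDef.diagonal hd
  refine posDef_iff_dotProduct_mulVec.mpr ⟨?_, ?_⟩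
  · have h := Matrix.isHermitian_conjTranspose_mul_mul Uᵀ hDpd.1
    have h2 : Uᵀᴴ = U := by ext i j; simp [conjTranspose_apply]
    rwa [h2] at h
  · intro x hx
    have hy : Uᵀ *ᵥ x ≠ 0 := by
      intro h
      apply hx
      have : U *ᵥ (Uᵀ *ᵥ x) = x := by
        rw [Matrix.mulVec_mulVec, hU', Matrix.one_mulVec]
      rw [h, Matrix.mulVec_zero] at this
      exact this.symm
    have key := hDpd.dotProduct_mulVec_pos hy
    have hstar : ∀ v : Fin p → ℝ, star v = v := fun v => funext fun i => rfl
    rw [hstar] at key ⊢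
    calc (0:ℝ) < (Uᵀ *ᵥ x) ⬝ᵥ (Matrix.diagonal d *ᵥ (Uᵀ *ᵥ x)) := key
      _ = x ⬝ᵥ ((U * Matrix.diagonal d * Uᵀ) *ᵥ x) := by
          rw [Matrix.mulVec_mulVec]
          conv_rhs => rw [Matrix.mul_assoc, ← Matrix.mulVec_mulVec,
            Matrix.dotProduct_mulVec, ← Matrix.mulVec_transpose]

theorem stmt1 {p n : ℕ} (hn : 1 ≤ n) (hnp : n < p) (κ : ℝ) (hκ : 1 ≤ κ)
    (S U : Matrix (Fin p) (Fin p) ℝ) (lamhat : Fin p → ℝ)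
    (hSsym : S.IsHermitian)
    (hU : Uᵀ * U = 1)
    (hS : S = U * Matrix.diagonal lamhat * Uᵀ)
    -- λ̂₁ ≥ ⋯ ≥ λ̂_n > 0 and λ̂_{n+1} = ⋯ = λ̂_p = 0 (0-indexed):
    (hanti : ∀ i j : Fin p, i ≤ j → lamhat j ≤ lamhat i)
    (hpos : ∀ i : Fin p, (i : ℕ) < n → 0 < lamhat i)
    (hzero : ∀ i : Fin p, n ≤ (i : ℕ) → lamhat i = 0)
    (lamstar : Fin p → ℝ)
    -- Λ* is feasible:
    (hfeas₁ : ∀ i, 0 ≤ lamstar i)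
    (hfeas₂ : ∀ i j, lamstar i ≤ κ * lamstar j)
    -- Λ* minimizes the Frobenius distance over feasible diagonal matrices:
    (hmin : ∀ lam : Fin p → ℝ, (∀ i, 0 ≤ lam i) → (∀ i j, lam i ≤ κ * lam j) →
      frobNorm (Matrix.diagonal lamstar - Matrix.diagonal lamhat) ≤
        frobNorm (Matrix.diagonal lam - Matrix.diagonal lamhat)) :
    (U * Matrix.diagonal lamstar * Uᵀ).PosDef ∧
    lamMax (U * Matrix.diagonal lamstar * Uᵀ) ≤ κ * lamMin (U * Matrix.diagonal lamstar * Uᵀ) ∧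
    ∀ M : Matrix (Fin p) (Fin p) ℝ, M.PosDef → lamMax M ≤ κ * lamMin M →
      frobNorm (U * Matrix.diagonal lamstar * Uᵀ - S) ≤ frobNorm (M - S) := by
  have hp : 0 < p := lt_of_le_of_lt (Nat.zero_le n) hnp
  haveI : Nonempty (Fin p) := ⟨⟨0, hp⟩⟩
  have hκ0 : (0:ℝ) < κ := lt_of_lt_of_le one_pos hκ
  have hU' : U * Uᵀ = 1 := mul_eq_one_comm.mp hU
  -- lamhat is nonnegative with a positive entry
  have hhatnn : ∀ i, 0 ≤ lamhat i := by
    intro i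
    rcases lt_or_ge (i : ℕ) n with h | h
    · exact (hpos i h).le
    · exact le_of_eq (hzero i h).symm
  have hT : 0 < ∑ i, lamhat i := by
    refine Finset.sum_pos' (fun i _ => hhatnn i) ⟨⟨0, hp⟩, Finset.mem_univ _, ?_⟩
    exact hpos _ (lt_of_lt_of_le Nat.zero_lt_one hn)
  -- Step 1: all lamstar entries are positive
  have hstarpos : ∀ i, 0 < lamstar i := by
    by_contra hcon
    push_neg at hcon
    obtain ⟨i0, hi0⟩ := hcon
    have hi0' : lamstar i0 = 0 := le_antisymm hi0 (hfeas₁ i0)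
    have hz : ∀ i, lamstar i = 0 := by
      intro i
      have := hfeas₂ i i0
      rw [hi0', mul_zero] at this
      exact le_antisymm this (hfeas₁ i)
    set ε : ℝ := (∑ i, lamhat i) / p with hεdef
    have hε : 0 < ε := div_pos hT (by exact_mod_cast hp)
    have hpε : (p : ℝ) * ε = ∑ i, lamhat i := by
      rw [hεdef]; field_simp
    have key := hmin (fun _ => ε) (fun _ => hε.le)
      (fun i j => le_mul_of_one_le_left hε.le hκ)
    rw [frobNorm_diag_sub, frobNorm_diag_sub] at key
    have h1 : ∑ i, (lamstar i - lamhat i) ^ 2 = ∑ i, (lamhat i) ^ 2 := by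
      refine Finset.sum_congr rfl fun i _ => ?_
      rw [hz i]; ring
    have h2 : ∑ i : Fin p, (ε - lamhat i) ^ 2
        = (∑ i, (lamhat i) ^ 2) - ε * (∑ i, lamhat i) := by
      have e1 : ∀ i : Fin p, (ε - lamhat i) ^ 2
          = (lamhat i) ^ 2 - 2 * ε * lamhat i + ε ^ 2 := fun i => by ring
      rw [Finset.sum_congr rfl fun i _ => e1 i, Finset.sum_add_distrib,
        Finset.sum_sub_distrib, ← Finset.mul_sum, Finset.sum_const, Finset.card_univ,
        Fintype.card_fin, nsmul_eq_mul]
      have : (p : ℝ) * ε ^ 2 = ε * (∑ i, lamhat i) := by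
        rw [sq, ← mul_assoc, hpε]; ring
      rw [this]; ring
    rw [h1, h2] at key
    have hlt : (∑ i, (lamhat i) ^ 2) - ε * (∑ i, lamhat i) < ∑ i, (lamhat i) ^ 2 := by
      nlinarith [mul_pos hε hT]
    have hmono := Real.sqrt_lt_sqrt (by rw [← h2]; positivity) hlt
    exact absurd (lt_of_le_of_lt key hmono) (lt_irrefl _)
  -- spectrum of the conjugated diagonal matrix
  have hspec : spectrum ℝ (U * Matrix.diagonal lamstar * Uᵀ) = Set.range lamstar := by
    rw [spectrum_conj U _ hU, spectrum_diagonal]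
  have hfinstar : (Set.range lamstar).Finite := Set.finite_range _
  have hnestar : (Set.range lamstar).Nonempty := Set.range_nonempty _
  refine ⟨posDef_conj U lamstar hU hstarpos, ?_, ?_⟩
  · -- Part 2
    obtain ⟨i0, hi0⟩ := hnestar.csSup_mem hfinstar
    obtain ⟨j0, hj0⟩ := hnestar.csInf_mem hfinstar
    rw [lamMax, lamMin, hspec, ← hi0, ← hj0]
    exact hfeas₂ i0 j0
  · -- Part 3
    intro M hPD hMκ
    have hM : M.IsHermitian := hPD.isHermitian
    set μ : Fin p → ℝ := hM.eigenvalues with hμdef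
    set V : Matrix (Fin p) (Fin p) ℝ := (hM.eigenvectorUnitary : Matrix (Fin p) (Fin p) ℝ)
      with hVdef
    have hVst : star V = Vᵀ := by ext i j; rfl
    have hV2 : V * Vᵀ = 1 := by
      rw [← hVst]; exact Unitary.coe_mul_star_self _
    have hMdec : M = V * Matrix.diagonal μ * Vᵀ := by
      have := hM.spectral_theorem
      rw [Unitary.conjStarAlgAut_apply, hVst] at this
      exact this
    set W : Matrix (Fin p) (Fin p) ℝ := Uᵀ * V with hWdef
    have hWWt : W * Wᵀ = 1 := by
      rw [hWdef, Matrix.transpose_mul, Matrix.transpose_transpose]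
      calc Uᵀ * V * (Vᵀ * U) = Uᵀ * (V * Vᵀ) * U := by noncomm_ring
        _ = 1 := by rw [hV2, Matrix.mul_one, hU]
    set N : Matrix (Fin p) (Fin p) ℝ := Uᵀ * M * U with hNdef
    have hNW : N = W * Matrix.diagonal μ * Wᵀ := by
      rw [hNdef, hMdec, hWdef, Matrix.transpose_mul, Matrix.transpose_transpose]
      noncomm_ring
    have hrow : ∀ i, ∑ k, (W i k) ^ 2 = 1 := by
      intro i
      have := congrFun (congrFun hWWt i) i
      rw [Matrix.mul_apply] at this
      simpa [Matrix.transpose_apply, sq, Matrix.one_apply] using this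
    have hNdiag : ∀ i, N i i = ∑ k, μ k * (W i k) ^ 2 := by
      intro i
      rw [hNW, Matrix.mul_apply]
      refine Finset.sum_congr rfl fun k _ => ?_
      rw [Matrix.mul_diagonal, Matrix.transpose_apply]
      ring
    -- eigenvalue bounds
    have hspecM : spectrum ℝ M = Set.range μ := hM.spectrum_real_eq_range_eigenvalues
    have hμle : ∀ k, μ k ≤ lamMax M := fun k => by
      rw [lamMax, hspecM]
      exact le_csSup (Set.finite_range μ).bddAbove ⟨k, rfl⟩
    have hμge : ∀ k, lamMin M ≤ μ k := fun k => by
      rw [lamMin, hspecM]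
      exact csInf_le (Set.finite_range μ).bddBelow ⟨k, rfl⟩
    have hminpos : 0 < lamMin M := by
      rw [lamMin, hspecM]
      obtain ⟨k0, hk0⟩ := (Set.range_nonempty μ).csInf_mem (Set.finite_range μ)
      rw [← hk0]
      exact hPD.eigenvalues_pos k0
    have hNub : ∀ i, N i i ≤ lamMax M := by
      intro i
      rw [hNdiag i]
      calc ∑ k, μ k * (W i k) ^ 2 ≤ ∑ k, lamMax M * (W i k) ^ 2 :=
            Finset.sum_le_sum fun k _ => mul_le_mul_of_nonneg_right (hμle k) (sq_nonneg _)
        _ = lamMax M := by rw [← Finset.mul_sum, hrow i, mul_one]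
    have hNlb : ∀ i, lamMin M ≤ N i i := by
      intro i
      rw [hNdiag i]
      calc lamMin M = ∑ k, lamMin M * (W i k) ^ 2 := by rw [← Finset.mul_sum, hrow i, mul_one]
        _ ≤ ∑ k, μ k * (W i k) ^ 2 :=
            Finset.sum_le_sum fun k _ => mul_le_mul_of_nonneg_right (hμge k) (sq_nonneg _)
    -- the diagonal of N is feasible
    have hNfeas₁ : ∀ i, 0 ≤ N i i := fun i => le_trans hminpos.le (hNlb i)
    have hNfeas₂ : ∀ i j, N i i ≤ κ * N j j := by
      intro i j
      calc N i i ≤ lamMax M := hNub i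
        _ ≤ κ * lamMin M := hMκ
        _ ≤ κ * N j j := mul_le_mul_of_nonneg_left (hNlb j) hκ0.le
    -- chain of inequalities
    have step1 : frobNorm (U * Matrix.diagonal lamstar * Uᵀ - S)
        = frobNorm (Matrix.diagonal lamstar - Matrix.diagonal lamhat) := by
      rw [hS, ← frobNorm_conj U (Matrix.diagonal lamstar - Matrix.diagonal lamhat) hU]
      congr 1
      noncomm_ring
    have step2 := hmin (fun i => N i i) hNfeas₁ hNfeas₂
    have step3 : frobNorm (Matrix.diagonal (fun i => N i i) - Matrix.diagonal lamhat)
        ≤ frobNorm (N - Matrix.diagonal lamhat) := by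
      simp only [frobNorm]
      apply Real.sqrt_le_sqrt
      rw [sumSq_diag_sub]
      calc ∑ i, (N i i - lamhat i) ^ 2
          = ∑ i, ((N - Matrix.diagonal lamhat) i i) ^ 2 := by
            refine Finset.sum_congr rfl fun i _ => ?_
            rw [Matrix.sub_apply, Matrix.diagonal_apply_eq]
        _ ≤ ∑ i, ∑ j, ((N - Matrix.diagonal lamhat) i j) ^ 2 := by
            refine Finset.sum_le_sum fun i _ => ?_
            exact Finset.single_le_sum
              (f := fun j => ((N - Matrix.diagonal lamhat) i j) ^ 2)
              (fun j _ => sq_nonneg _) (Finset.mem_univ i)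
    have step4 : frobNorm (N - Matrix.diagonal lamhat) = frobNorm (M - S) := by
      have hdiagS : Matrix.diagonal lamhat = Uᵀ * S * U := by
        rw [hS]
        calc Matrix.diagonal lamhat
            = (Uᵀ * U) * Matrix.diagonal lamhat * (Uᵀ * U) := by
              rw [hU, Matrix.one_mul, Matrix.mul_one]
          _ = Uᵀ * (U * Matrix.diagonal lamhat * Uᵀ) * U := by noncomm_ring
      rw [hdiagS, hNdef]
      have : Uᵀ * M * U - Uᵀ * S * U = Uᵀ * (M - S) * Uᵀᵀ := by
        rw [Matrix.transpose_transpose]; noncomm_ring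
      rw [this, frobNorm_conj Uᵀ (M - S) (by rw [Matrix.transpose_transpose, hU'])]
    calc frobNorm (U * Matrix.diagonal lamstar * Uᵀ - S)
        = frobNorm (Matrix.diagonal lamstar - Matrix.diagonal lamhat) := step1
      _ ≤ frobNorm (Matrix.diagonal (fun i => N i i) - Matrix.diagonal lamhat) := step2
      _ ≤ frobNorm (N - Matrix.diagonal lamhat) := step3
      _ = frobNorm (M - S) := step4
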